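/- Let ε > 0 and M > 2ε, and let θ* ∈ (ε, M − ε). For real numbers a < b let ψ_{a,b} : ℝ → ℝ be defined by ψ_{a,b}(x) = 0 if x ≤ a, ψ_{a,b}(x) = exp(−(b − x)²/(x − a)) if a < x ≤ b, and ψ_{a,b}(x) = 1 if x > b. Define the penalty function b : ℝ → ℝ by b(θ) = (1 − ψ_{0,ε}(θ)) (θ − ε)² + ψ_{M−ε,M}(θ) (θ − M + ε)². Then there exist constants C₂ > 0 and ε₀ > 0 such that for every θ ∈ ℝ and every e with 0 < e < ε₀, |b(θ + e) − b(θ − e)| ≤ C₂ |θ − θ*| e. -/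

import Mathlib

/-- The smooth step transition function `ψ_{a,b}`. -/
noncomputable def psiStep (a b : ℝ) (x : ℝ) : ℝ :=
  if x ≤ a then 0
  else if x ≤ b then Real.exp (-(b - x) ^ 2 / (x - a))
  else 1

/-- The quadratic penalty function
`b(θ) = (1 − ψ_{0,ε}(θ)) (θ − ε)² + ψ_{M−ε,M}(θ) (θ − M + ε)²`. -/
noncomputable def penalty (ε M : ℝ) (θ : ℝ) : ℝ :=
  (1 - psiStep 0 ε θ) * (θ - ε) ^ 2 + psiStep (M - ε) M θ * (θ - M + ε) ^ 2

/-- Symmetric-difference regularity bound on the penalty function (Assumption 1.c of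
the paper): there are `C₂ > 0` and `ε₀ > 0` such that
`|b(θ + e) − b(θ − e)| ≤ C₂ |θ − θ*| e` for all `θ` and all `0 < e < ε₀`. -/


lemma psiStep_of_le {a b x : ℝ} (h : x ≤ a) : psiStep a b x = 0 := if_pos h

lemma psiStep_of_gt {a b x : ℝ} (hab : a < b) (h : b < x) : psiStep a b x = 1 := by
  unfold psiStep
  rw [if_neg (by linarith), if_neg (by linarith)]

lemma psiStep_nonneg (a b x : ℝ) : 0 ≤ psiStep a b x := by
  unfold psiStep
  split_ifs <;> positivity

lemma psiStep_le_one {a b : ℝ} (hab : a < b) (x : ℝ) : psiStep a b x ≤ 1 := by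
  unfold psiStep
  split_ifs with h1 h2
  · norm_num
  · rw [Real.exp_le_one_iff]
    apply div_nonpos_of_nonpos_of_nonneg
    · nlinarith [sq_nonneg (b - x)]
    · linarith [not_le.mp h1]
  · exact le_rfl

lemma exp_neg_le_inv {s : ℝ} (hs : 0 < s) : Real.exp (-s) ≤ 1 / s := by
  rw [Real.exp_neg, inv_eq_one_div]
  apply one_div_le_one_div_of_le hs
  linarith [Real.add_one_le_exp s]

lemma exp_neg_le_four_div_sq {s : ℝ} (hs : 0 < s) : Real.exp (-s) ≤ 4 / s ^ 2 := by
  have h2 : Real.exp (s/2) * Real.exp (s/2) = Real.exp s := by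
    rw [← Real.exp_add]; ring_nf
  have h3 := Real.add_one_le_exp (s/2)
  have h4 : s ^ 2 / 4 ≤ Real.exp s := by nlinarith
  rw [Real.exp_neg, inv_eq_one_div]
  calc 1 / Real.exp s ≤ 1 / (s ^ 2 / 4) := by
        apply one_div_le_one_div_of_le (by positivity) h4
    _ = 4 / s ^ 2 := by field_simp


noncomputable def psiD (a b t : ℝ) : ℝ :=
  (b - t) * (t + b - 2*a) / (t - a) ^ 2 * Real.exp (-(b - t) ^ 2 / (t - a))

lemma psiStep_formula_deriv {a : ℝ} (b : ℝ) {t : ℝ} (ht : a < t) :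
    HasDerivAt (fun s => Real.exp (-(b - s) ^ 2 / (s - a))) (psiD a b t) t := by
  have hne : t - a ≠ 0 := by linarith
  have h1 : HasDerivAt (fun s : ℝ => -(b - s) ^ 2) (2 * (b - t)) t := by
    have hb : HasDerivAt (fun s : ℝ => b - s) (-1) t := (hasDerivAt_id t).const_sub b
    have := (hb.pow 2).neg
    refine this.congr_deriv ?_
    ring
  have h2 : HasDerivAt (fun s : ℝ => s - a) 1 t := (hasDerivAt_id t).sub_const a
  have h3 := (h1.div h2 hne).exp
  refine h3.congr_deriv ?_
  unfold psiD
  simp only [Pi.div_apply]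
  field_simp
  ring

lemma exp_neg_le_four_div_sq' {s : ℝ} (hs : 0 < s) : Real.exp (-s) ≤ 4 / s ^ 2 := by
  have h2 : Real.exp (s/2) * Real.exp (s/2) = Real.exp s := by
    rw [← Real.exp_add]; ring_nf
  have h3 := Real.add_one_le_exp (s/2)
  have h4 : s ^ 2 / 4 ≤ Real.exp s := by nlinarith
  rw [Real.exp_neg, inv_eq_one_div]
  calc 1 / Real.exp s ≤ 1 / (s ^ 2 / 4) := by
        apply one_div_le_one_div_of_le (by positivity) h4
    _ = 4 / s ^ 2 := by field_simp

lemma psiD_bound {a b t : ℝ} (hab : a < b) (ht : t ∈ Set.Ioc a b) :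
    |psiD a b t| ≤ 128 / (b - a) ^ 2 + 8 := by
  obtain ⟨ht1, ht2⟩ := ht
  have h0 : 0 < t - a := by linarith
  have hc : 0 < b - a := by linarith
  have hnn : 0 ≤ psiD a b t := by
    unfold psiD
    have : 0 ≤ (b - t) * (t + b - 2*a) := by nlinarith
    positivity
  rw [abs_of_nonneg hnn]
  unfold psiD
  have hexp_pos := Real.exp_pos (-(b - t) ^ 2 / (t - a))
  rcases le_or_gt (a + (b - a)/2) t with hcase | hcase
  · -- t in right half: exp ≤ 1, prefactor ≤ 8
    have hE : Real.exp (-(b - t) ^ 2 / (t - a)) ≤ 1 := by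
      rw [Real.exp_le_one_iff]
      apply div_nonpos_of_nonpos_of_nonneg
      · nlinarith [sq_nonneg (b - t)]
      · linarith
    have hpre : (b - t) * (t + b - 2*a) / (t - a) ^ 2 ≤ 8 := by
      rw [div_le_iff₀ (by positivity)]
      nlinarith
    have hpre0 : 0 ≤ (b - t) * (t + b - 2*a) / (t - a) ^ 2 := by
      have : 0 ≤ (b - t) * (t + b - 2*a) := by nlinarith
      positivity
    have h8 : (b - t) * (t + b - 2*a) / (t - a) ^ 2 * Real.exp (-(b - t) ^ 2 / (t - a)) ≤ 8 := by
      calc (b - t) * (t + b - 2*a) / (t - a) ^ 2 * Real.exp (-(b - t) ^ 2 / (t - a))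
          ≤ 8 * 1 := mul_le_mul hpre hE hexp_pos.le (by norm_num)
        _ = 8 := by ring
    have hq : (0:ℝ) ≤ 128 / (b - a) ^ 2 := by positivity
    linarith
  · -- t in left half: exp ≤ 64 (t-a)^2 / (b-a)^4
    have hbt : (b - a) / 2 ≤ b - t := by linarith
    have hbt0 : 0 < b - t := by linarith
    have hs : 0 < (b - t) ^ 2 / (t - a) := div_pos (pow_pos hbt0 2) h0
    have hE1 : Real.exp (-((b - t) ^ 2 / (t - a))) ≤ 4 / ((b - t) ^ 2 / (t - a)) ^ 2 :=
      exp_neg_le_four_div_sq' hs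
    have hE2 : 4 / ((b - t) ^ 2 / (t - a)) ^ 2 = 4 * (t - a) ^ 2 / (b - t) ^ 4 := by
      field_simp
    have hE3 : 4 * (t - a) ^ 2 / (b - t) ^ 4 ≤ 64 * (t - a) ^ 2 / (b - a) ^ 4 := by
      rw [div_le_div_iff₀ (pow_pos hbt0 4) (by positivity)]
      have hp : ((b - a)/2) ^ 4 ≤ (b - t) ^ 4 := by
        apply pow_le_pow_left₀ (by positivity) hbt
      nlinarith [mul_le_mul_of_nonneg_left hp (show (0:ℝ) ≤ 64 * (t - a)^2 by positivity)]
    have hEt : Real.exp (-(b - t) ^ 2 / (t - a)) ≤ 64 * (t - a) ^ 2 / (b - a) ^ 4 := by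
      have hee : -(b - t) ^ 2 / (t - a) = -((b - t) ^ 2 / (t - a)) := by ring
      rw [hee]
      linarith
    have hpre0 : 0 ≤ (b - t) * (t + b - 2*a) / (t - a) ^ 2 := by
      have : 0 ≤ (b - t) * (t + b - 2*a) := by nlinarith
      positivity
    have hfin : (b - t) * (t + b - 2*a) / (t - a) ^ 2 * (64 * (t - a) ^ 2 / (b - a) ^ 4)
        ≤ 128 / (b - a) ^ 2 := by
      have heq : (b - t) * (t + b - 2*a) / (t - a) ^ 2 * (64 * (t - a) ^ 2 / (b - a) ^ 4)
          = 64 * ((b - t) * (t + b - 2*a)) / (b - a) ^ 4 := by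
        field_simp
      rw [heq, div_le_div_iff₀ (by positivity) (by positivity)]
      nlinarith
    have := mul_le_mul_of_nonneg_left hEt hpre0
    nlinarith

lemma psiStep_lipschitz_Ioc {a b : ℝ} (hab : a < b) {x y : ℝ}
    (hx : x ∈ Set.Ioc a b) (hy : y ∈ Set.Ioc a b) :
    |psiStep a b y - psiStep a b x| ≤ (128 / (b - a) ^ 2 + 8) * |y - x| := by
  have key := Convex.norm_image_sub_le_of_norm_hasDerivWithin_le
    (f := psiStep a b) (f' := psiD a b) (s := Set.Ioc a b) (C := 128 / (b - a) ^ 2 + 8)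
    (fun t ht => by
      have hd := (psiStep_formula_deriv b ht.1).hasDerivWithinAt (s := Set.Ioc a b)
      apply hd.congr
      · intro z hz
        unfold psiStep
        rw [if_neg (by linarith [hz.1]), if_pos hz.2]
      · unfold psiStep
        rw [if_neg (by linarith [ht.1]), if_pos ht.2])
    (fun t ht => by simpa using psiD_bound hab ht)
    (convex_Ioc a b) hx hy
  simpa using key

lemma psiStep_le_linear {a b : ℝ} (hab : a < b) {y : ℝ} (hy : a < y) :
    psiStep a b y ≤ (4 / (b - a) ^ 2 + 2 / (b - a)) * (y - a) := by
  have hc : 0 < b - a := by linarith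
  have hy0 : 0 < y - a := by linarith
  rcases le_or_gt y b with hyb | hyb
  · rcases lt_or_ge y (a + (b - a) / 2) with hcase | hcase
    · -- left half : psi ≤ (y-a)/(b-y)^2 ≤ 4 (y-a)/(b-a)^2
      have hby : (b - a) / 2 ≤ b - y := by linarith
      have hby0 : 0 < b - y := by linarith
      have hpsi : psiStep a b y = Real.exp (-((b - y) ^ 2 / (y - a))) := by
        unfold psiStep
        rw [if_neg (by linarith), if_pos hyb]
        congr 1
        ring
      have hs : 0 < (b - y) ^ 2 / (y - a) := div_pos (pow_pos hby0 2) hy0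
      have h1 : psiStep a b y ≤ 1 / ((b - y) ^ 2 / (y - a)) := by
        rw [hpsi]; exact exp_neg_le_inv hs
      have h2 : 1 / ((b - y) ^ 2 / (y - a)) = (y - a) / (b - y) ^ 2 := by
        field_simp
      have h3 : (y - a) / (b - y) ^ 2 ≤ 4 * (y - a) / (b - a) ^ 2 := by
        rw [div_le_div_iff₀ (pow_pos hby0 2) (by positivity)]
        have hp : ((b - a)/2) ^ 2 ≤ (b - y) ^ 2 := by
          apply pow_le_pow_left₀ (by positivity) hby
        nlinarith [mul_le_mul_of_nonneg_left hp (le_of_lt hy0)]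
      have h4 : (0:ℝ) ≤ 2 / (b - a) * (y - a) := by positivity
      have : 4 * (y - a) / (b - a) ^ 2 = 4 / (b - a) ^ 2 * (y - a) := by ring
      nlinarith
    · -- right half : psi ≤ 1 ≤ 2/(b-a) * (y - a)
      have h1 : psiStep a b y ≤ 1 := psiStep_le_one hab y
      have h2 : (1:ℝ) ≤ 2 / (b - a) * (y - a) := by
        rw [div_mul_eq_mul_div, le_div_iff₀ hc]
        nlinarith
      have h4 : (0:ℝ) ≤ 4 / (b - a) ^ 2 * (y - a) := by positivity
      nlinarith
  · have h1 : psiStep a b y = 1 := psiStep_of_gt hab hyb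
    have h2 : (1:ℝ) ≤ 2 / (b - a) * (y - a) := by
      rw [div_mul_eq_mul_div, le_div_iff₀ hc]
      nlinarith
    have h4 : (0:ℝ) ≤ 4 / (b - a) ^ 2 * (y - a) := by positivity
    nlinarith

lemma psiStep_lipschitz_le {a b : ℝ} (hab : a < b) {x y : ℝ} (hxy : x ≤ y) :
    |psiStep a b y - psiStep a b x|
      ≤ (128 / (b - a) ^ 2 + 8 + 4 / (b - a) ^ 2 + 2 / (b - a)) * |y - x| := by
  have hc : 0 < b - a := by linarith
  have hL0 : (0:ℝ) ≤ 128 / (b - a) ^ 2 + 8 := by positivity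
  have hL1 : (0:ℝ) ≤ 4 / (b - a) ^ 2 + 2 / (b - a) := by positivity
  have habs : |y - x| = y - x := abs_of_nonneg (by linarith)
  rcases le_or_gt y a with hya | hya
  · rw [psiStep_of_le hya, psiStep_of_le (le_trans hxy hya)]
    simp
    positivity
  · rcases le_or_gt x a with hxa | hxa
    · -- x ≤ a < y
      rw [psiStep_of_le hxa, sub_zero, habs]
      have h1 : psiStep a b y ≤ (4 / (b - a) ^ 2 + 2 / (b - a)) * (y - a) :=
        psiStep_le_linear hab hya
      have h2 : (4 / (b - a) ^ 2 + 2 / (b - a)) * (y - a)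
          ≤ (4 / (b - a) ^ 2 + 2 / (b - a)) * (y - x) := by
        apply mul_le_mul_of_nonneg_left (by linarith) hL1
      rw [abs_of_nonneg (psiStep_nonneg a b y)]
      nlinarith [psiStep_nonneg a b y, mul_nonneg hL0 (show (0:ℝ) ≤ y - x by linarith)]
    · rcases le_or_gt y b with hyb | hyb
      · -- both in Ioc a b
        have key := psiStep_lipschitz_Ioc hab (Set.mem_Ioc.mpr ⟨hxa, le_trans hxy hyb⟩)
          (Set.mem_Ioc.mpr ⟨hya, hyb⟩)
        rw [habs] at key ⊢
        nlinarith [mul_nonneg hL1 (show (0:ℝ) ≤ y - x by linarith)]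
      · rcases le_or_gt x b with hxb | hxb
        · -- a < x ≤ b < y : psi y = 1 = psi b
          have hyval : psiStep a b y = 1 := psiStep_of_gt hab hyb
          have hbval : psiStep a b b = 1 := by
            unfold psiStep
            rw [if_neg (by linarith), if_pos le_rfl]
            simp
          have key := psiStep_lipschitz_Ioc hab (Set.mem_Ioc.mpr ⟨hxa, hxb⟩)
            (Set.mem_Ioc.mpr ⟨hab, le_rfl⟩)
          rw [hbval] at key
          rw [hyval, habs]
          have habs2 : |b - x| = b - x := abs_of_nonneg (by linarith)
          rw [habs2] at key
          have : (128 / (b - a) ^ 2 + 8) * (b - x) ≤ (128 / (b - a) ^ 2 + 8) * (y - x) := by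
            apply mul_le_mul_of_nonneg_left (by linarith) hL0
          nlinarith [mul_nonneg hL1 (show (0:ℝ) ≤ y - x by linarith)]
        · -- both > b
          rw [psiStep_of_gt hab hyb, psiStep_of_gt hab hxb]
          simp
          positivity

lemma psiStep_lipschitz {a b : ℝ} (hab : a < b) (x y : ℝ) :
    |psiStep a b x - psiStep a b y|
      ≤ (128 / (b - a) ^ 2 + 8 + 4 / (b - a) ^ 2 + 2 / (b - a)) * |x - y| := by
  rcases le_or_gt x y with h | h
  · rw [abs_sub_comm, abs_sub_comm x y]
    exact psiStep_lipschitz_le hab h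
  · exact psiStep_lipschitz_le hab h.le


lemma penalty_lip {ε M : ℝ} (hε : 0 < ε) (hM : 2 * ε < M) (x y : ℝ) (hxy : |x - y| ≤ 1) :
    |penalty ε M x - penalty ε M y| ≤
      (2 + 2*ε + 2*|M - ε| + 2*(1+ε)^2 * (128/ε^2 + 8 + 4/ε^2 + 2/ε)) *
        ((1 + |x| + |y|) * |x - y|) := by
  set L : ℝ := 128/ε^2 + 8 + 4/ε^2 + 2/ε with hLdef
  have hL0 : (0:ℝ) ≤ L := by rw [hLdef]; positivity
  have hMε : M - ε < M := by linarith
  have hψ1 : |psiStep 0 ε x - psiStep 0 ε y| ≤ L * |x - y| := by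
    have := psiStep_lipschitz (show (0:ℝ) < ε from hε) x y
    rw [show ε - 0 = ε by ring] at this
    exact this
  have hψ2 : |psiStep (M-ε) M x - psiStep (M-ε) M y| ≤ L * |x - y| := by
    have := psiStep_lipschitz hMε x y
    rw [show M - (M-ε) = ε by ring] at this
    exact this
  have hxy1 : x - y ≤ 1 := (abs_le.mp hxy).2
  have hxy2 : -1 ≤ x - y := (abs_le.mp hxy).1
  set ψ1x := psiStep 0 ε x
  set ψ1y := psiStep 0 ε y
  set ψ2x := psiStep (M-ε) M x
  set ψ2y := psiStep (M-ε) M y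
  have hid : penalty ε M x - penalty ε M y =
      (1 - ψ1x) * ((x-ε)^2 - (y-ε)^2) + (ψ1y - ψ1x) * (y-ε)^2
      + (ψ2x * ((x-M+ε)^2 - (y-M+ε)^2) + (ψ2x - ψ2y) * (y-M+ε)^2) := by
    unfold penalty
    ring
  have hS : (0:ℝ) ≤ |x - y| := abs_nonneg _
  -- T1
  have hT1 : |(1 - ψ1x) * ((x-ε)^2 - (y-ε)^2)| ≤ (|x| + |y| + 2*ε) * |x - y| := by
    rw [abs_mul]
    have h1 : |1 - ψ1x| ≤ 1 := by
      have := psiStep_nonneg 0 ε x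
      have := psiStep_le_one (show (0:ℝ) < ε from hε) x
      rw [abs_le]
      constructor <;> simp_all <;> linarith
    have h2 : |(x-ε)^2 - (y-ε)^2| = |x + y - 2*ε| * |x - y| := by
      rw [← abs_mul]
      congr 1
      ring
    have h3 : |x + y - 2*ε| ≤ |x| + |y| + 2*ε := by
      rcases abs_cases (x + y - 2*ε) with ⟨h, _⟩ | ⟨h, _⟩
      · linarith [le_abs_self x, le_abs_self y]
      · linarith [neg_abs_le x, neg_abs_le y]
    calc |1 - ψ1x| * |(x-ε)^2 - (y-ε)^2| ≤ 1 * |(x-ε)^2 - (y-ε)^2| := by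
          apply mul_le_mul_of_nonneg_right h1 (abs_nonneg _)
      _ = |x + y - 2*ε| * |x - y| := by rw [one_mul, h2]
      _ ≤ (|x| + |y| + 2*ε) * |x - y| := by
          apply mul_le_mul_of_nonneg_right h3 hS
  -- T2
  have hT2 : |(ψ1y - ψ1x) * (y-ε)^2| ≤ (1+ε)^2 * L * |x - y| := by
    by_cases hy' : |y - ε| ≤ 1 + ε
    · rw [abs_mul]
      have h1 : |ψ1y - ψ1x| ≤ L * |x - y| := by rw [abs_sub_comm]; exact hψ1
      have h2 : |(y-ε)^2| ≤ (1+ε)^2 := by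
        rw [abs_pow]
        apply pow_le_pow_left₀ (abs_nonneg _) hy'
      calc |ψ1y - ψ1x| * |(y-ε)^2| ≤ (L * |x - y|) * (1+ε)^2 :=
            mul_le_mul h1 h2 (abs_nonneg _) (by positivity)
        _ = (1+ε)^2 * L * |x - y| := by ring
    · have heq : ψ1x = ψ1y := by
        rcases lt_or_ge (1 + ε) (y - ε) with hyy | hyy
        · have hx1 : ε < x := by linarith
          have hy1 : ε < y := by linarith
          show psiStep 0 ε x = psiStep 0 ε y
          rw [psiStep_of_gt hε hx1, psiStep_of_gt hε hy1]
        · have hyy2 : y - ε < -(1 + ε) := by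
            rcases abs_cases (y - ε) with ⟨h, _⟩ | ⟨h, _⟩ <;> push_neg at hy' <;> linarith
          have hx1 : x ≤ 0 := by linarith
          have hy1 : y ≤ 0 := by linarith
          show psiStep 0 ε x = psiStep 0 ε y
          rw [psiStep_of_le hx1, psiStep_of_le hy1]
      rw [heq]
      simp
      positivity
  -- T3
  have hT3 : |ψ2x * ((x-M+ε)^2 - (y-M+ε)^2)| ≤ (|x| + |y| + 2*|M - ε|) * |x - y| := by
    rw [abs_mul]
    have h1 : |ψ2x| ≤ 1 := by
      rw [abs_of_nonneg (psiStep_nonneg _ _ _)]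
      exact psiStep_le_one hMε x
    have h2 : |(x-M+ε)^2 - (y-M+ε)^2| = |x + y - 2*(M-ε)| * |x - y| := by
      rw [← abs_mul]
      congr 1
      ring
    have h3 : |x + y - 2*(M-ε)| ≤ |x| + |y| + 2*|M-ε| := by
      rcases abs_cases (x + y - 2*(M-ε)) with ⟨h, _⟩ | ⟨h, _⟩
      · linarith [le_abs_self x, le_abs_self y, neg_abs_le (M-ε)]
      · linarith [neg_abs_le x, neg_abs_le y, le_abs_self (M-ε)]
    calc |ψ2x| * |(x-M+ε)^2 - (y-M+ε)^2| ≤ 1 * |(x-M+ε)^2 - (y-M+ε)^2| :=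
          mul_le_mul_of_nonneg_right h1 (abs_nonneg _)
      _ = |x + y - 2*(M-ε)| * |x - y| := by rw [one_mul, h2]
      _ ≤ (|x| + |y| + 2*|M-ε|) * |x - y| := mul_le_mul_of_nonneg_right h3 hS
  -- T4
  have hT4 : |(ψ2x - ψ2y) * (y-M+ε)^2| ≤ (1+ε)^2 * L * |x - y| := by
    by_cases hy' : |y - (M-ε)| ≤ 1 + ε
    · rw [abs_mul]
      have h2 : |(y-M+ε)^2| ≤ (1+ε)^2 := by
        rw [abs_pow, show y - M + ε = y - (M-ε) by ring]
        apply pow_le_pow_left₀ (abs_nonneg _) hy'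
      calc |ψ2x - ψ2y| * |(y-M+ε)^2| ≤ (L * |x - y|) * (1+ε)^2 :=
            mul_le_mul hψ2 h2 (abs_nonneg _) (by positivity)
        _ = (1+ε)^2 * L * |x - y| := by ring
    · have heq : ψ2x = ψ2y := by
        rcases lt_or_ge (1 + ε) (y - (M-ε)) with hyy | hyy
        · have hx1 : M < x := by linarith
          have hy1 : M < y := by linarith
          show psiStep (M-ε) M x = psiStep (M-ε) M y
          rw [psiStep_of_gt hMε hx1, psiStep_of_gt hMε hy1]
        · have hyy2 : y - (M-ε) < -(1 + ε) := by
            rcases abs_cases (y - (M-ε)) with ⟨h, _⟩ | ⟨h, _⟩ <;> push_neg at hy' <;> linarith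
          have hx1 : x ≤ M - ε := by linarith
          have hy1 : y ≤ M - ε := by linarith
          show psiStep (M-ε) M x = psiStep (M-ε) M y
          rw [psiStep_of_le hx1, psiStep_of_le hy1]
      rw [heq]
      simp
      positivity
  -- combine
  have habs : |penalty ε M x - penalty ε M y| ≤
      |(1 - ψ1x) * ((x-ε)^2 - (y-ε)^2)| + |(ψ1y - ψ1x) * (y-ε)^2|
      + |ψ2x * ((x-M+ε)^2 - (y-M+ε)^2) + (ψ2x - ψ2y) * (y-M+ε)^2| := by
    rw [hid]
    exact le_trans (abs_add_le _ _) (by linarith [abs_add_le ((1 - ψ1x) * ((x-ε)^2 - (y-ε)^2)) ((ψ1y - ψ1x) * (y-ε)^2)])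
  have habs2 : |ψ2x * ((x-M+ε)^2 - (y-M+ε)^2) + (ψ2x - ψ2y) * (y-M+ε)^2|
      ≤ |ψ2x * ((x-M+ε)^2 - (y-M+ε)^2)| + |(ψ2x - ψ2y) * (y-M+ε)^2| := abs_add_le _ _
  have hA2 : (0:ℝ) ≤ 2*ε + 2*|M - ε| + 2*(1+ε)^2 * L := by positivity
  nlinarith [mul_nonneg (mul_nonneg hA2 (add_nonneg (abs_nonneg x) (abs_nonneg y))) hS,
    mul_nonneg hS (add_nonneg (abs_nonneg x) (abs_nonneg y)), abs_nonneg (M - ε),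
    mul_nonneg hL0 hS]

lemma penalty_zero {ε M : ℝ} (hε : 0 < ε) {x : ℝ} (h1 : ε < x) (h2 : x < M - ε) :
    penalty ε M x = 0 := by
  unfold penalty
  rw [psiStep_of_gt hε h1, psiStep_of_le (le_of_lt h2)]
  ring


theorem penalty_symmetric_difference_bound
    (ε M θstar : ℝ) (hε : 0 < ε) (hM : 2 * ε < M)
    (hθstar : ε < θstar ∧ θstar < M - ε) :
    ∃ C₂ : ℝ, 0 < C₂ ∧ ∃ ε₀ : ℝ, 0 < ε₀ ∧
      ∀ θ e : ℝ, 0 < e → e < ε₀ →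
        |penalty ε M (θ + e) - penalty ε M (θ - e)| ≤ C₂ * |θ - θstar| * e := by
  obtain ⟨hts1, hts2⟩ := hθstar
  set L : ℝ := 128/ε^2 + 8 + 4/ε^2 + 2/ε with hLdef
  set A : ℝ := 2 + 2*ε + 2*|M - ε| + 2*(1+ε)^2 * L with hAdef
  have hL0 : (0:ℝ) ≤ L := by rw [hLdef]; positivity
  have hA2 : (2:ℝ) ≤ A := by
    rw [hAdef]
    nlinarith [abs_nonneg (M - ε), sq_nonneg (1+ε)]
  set δ : ℝ := min (θstar - ε) (M - ε - θstar) / 2 with hδdef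
  have hδ0 : (0:ℝ) < δ := by
    rw [hδdef]
    apply div_pos (lt_min (by linarith) (by linarith)) (by norm_num)
  set K : ℝ := (2*|θstar| + 3)/δ + 2 with hKdef
  have hq : (0:ℝ) ≤ (2*|θstar| + 3)/δ := by positivity
  have hK0 : (0:ℝ) < K := by rw [hKdef]; linarith
  refine ⟨2*A*K, by nlinarith, min δ (1/2), lt_min hδ0 (by norm_num), ?_⟩
  intro θ e he0 he1
  have heδ : e < δ := lt_of_lt_of_le he1 (min_le_left _ _)
  have heh : e < 1/2 := lt_of_lt_of_le he1 (min_le_right _ _)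
  rcases le_or_gt |θ - θstar| δ with hcase | hcase
  · -- both points in the zero region
    have hθ1 : θ - θstar ≤ δ := (abs_le.mp hcase).2
    have hθ2 : -δ ≤ θ - θstar := (abs_le.mp hcase).1
    have hd1 : δ ≤ (θstar - ε)/2 := by
      rw [hδdef]
      have := min_le_left (θstar - ε) (M - ε - θstar)
      linarith
    have hd2 : δ ≤ (M - ε - θstar)/2 := by
      rw [hδdef]
      have := min_le_right (θstar - ε) (M - ε - θstar)
      linarith
    have h1 : ε < θ - e := by linarith
    have h2 : θ + e < M - ε := by linarith
    rw [penalty_zero hε (by linarith : ε < θ + e) h2,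
        penalty_zero hε h1 (by linarith : θ - e < M - ε)]
    simp only [sub_zero, abs_zero]
    positivity
  · -- Lipschitz-type estimate
    have hxy : |(θ + e) - (θ - e)| ≤ 1 := by
      rw [show (θ + e) - (θ - e) = 2*e by ring, abs_of_nonneg (by linarith)]
      linarith
    have key := penalty_lip hε hM (θ + e) (θ - e) hxy
    have h2e : |(θ + e) - (θ - e)| = 2*e := by
      rw [show (θ + e) - (θ - e) = 2*e by ring, abs_of_nonneg (by linarith)]
    rw [h2e] at key
    have hb1 : |θ + e| ≤ |θ| + e := by
      calc |θ + e| ≤ |θ| + |e| := abs_add_le θ e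
        _ = |θ| + e := by rw [abs_of_pos he0]
    have hb2 : |θ - e| ≤ |θ| + e := by
      calc |θ - e| ≤ |θ| + |e| := abs_sub θ e
        _ = |θ| + e := by rw [abs_of_pos he0]
    have hb3 : |θ| ≤ |θstar| + |θ - θstar| := by
      calc |θ| = |θstar + (θ - θstar)| := by ring_nf
        _ ≤ |θstar| + |θ - θstar| := abs_add_le _ _
    have hmid : 1 + |θ + e| + |θ - e| ≤ K * |θ - θstar| := by
      have hprod : (2*|θstar| + 3)/δ * δ = 2*|θstar| + 3 := by
        field_simp
      have hstep := mul_le_mul_of_nonneg_left hcase.le hq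
      rw [hKdef]
      nlinarith
    have hA0 : (0:ℝ) ≤ A := by linarith
    calc |penalty ε M (θ + e) - penalty ε M (θ - e)|
        ≤ A * ((1 + |θ + e| + |θ - e|) * (2*e)) := key
      _ ≤ A * ((K * |θ - θstar|) * (2*e)) := by
          apply mul_le_mul_of_nonneg_left _ hA0
          apply mul_le_mul_of_nonneg_right hmid (by linarith)
      _ = 2*A*K * |θ - θstar| * e := by ring
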